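/- arXiv:1008.3691 — 2 statements merged into one kernel-verified Lean document; each statement's English description precedes it below -/
import Mathlib

section
/- For all positive integers r, w, d, s, t with w ≤ r, 0 < s ≤ r + w and t ≥ r + w, it holds that N((r,w;d),t) ≥ Σ_j C(s,j) · N((r−s+j, w−j; d), t−s), where the sum runs over all integers j with max(0, s−r) ≤ j ≤ min(w, s) and C(·,·) denotes the binomial coefficient. -/
/-- `B : Fin t → Finset (Fin n)` is an (r,w;d)-cover-free family: for any disjoint
index sets `L, M` with `|L| = r`, `|M| = w`, the intersection of the blocks in `L`
has at least `d` elements outside the union of the blocks in `M`. -/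
def IsCFF (r w d n t : ℕ) (B : Fin t → Finset (Fin n)) : Prop :=
  ∀ L M : Finset (Fin t), Disjoint L M → L.card = r → M.card = w →
    d ≤ ((L.inf B) \ (M.sup B)).card

/-- `Ncff r w d t` = `N((r,w;d),t)`, the minimum number of points of an
(r,w;d)-CFF with `t` blocks, with the convention that it equals 1 if `r = 0` or `w = 0`. -/
noncomputable def Ncff (r w d t : ℕ) : ℕ :=
  if r = 0 ∨ w = 0 then 1
  else sInf {n : ℕ | ∃ B : Fin t → Finset (Fin n), IsCFF r w d n t B}

lemma mem_finset_inf {α ι : Type*} [DecidableEq α] [Fintype α] {s : Finset ι}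
    {f : ι → Finset α} {a : α} : a ∈ s.inf f ↔ ∀ i ∈ s, a ∈ f i := by
  induction s using Finset.cons_induction <;> simp [*]

lemma cff_main (r w d s t : ℕ)
    (hr : 0 < r) (hw : 0 < w) (hwr : w ≤ r) (hd : 0 < d)
    (hs : 0 < s) (hsrw : s ≤ r + w) (ht : r + w ≤ t)
    (n : ℕ) (B : Fin t → Finset (Fin n)) (hB : IsCFF r w d n t B) :
    ∑ j ∈ Finset.Icc (s - r) (min w s), s.choose j * Ncff (r - (s - j)) (w - j) d (t - s)
      ≤ n := by
  classical
  have hst : s ≤ t := by omega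
  set F : Finset (Fin t) := (Finset.range s).attachFin
    (fun m hm => lt_of_lt_of_le (Finset.mem_range.mp hm) hst) with hF
  have hFmem : ∀ i : Fin t, i ∈ F ↔ (i : ℕ) < s := by
    intro i; rw [hF, Finset.mem_attachFin]; exact Finset.mem_range
  have hFcard : F.card = s := by rw [hF, Finset.card_attachFin, Finset.card_range]
  set g : Fin (t - s) → Fin t := fun k => ⟨s + (k : ℕ), by omega⟩ with hgdef
  have hg : Function.Injective g := by
    intro a b h
    have : s + (a : ℕ) = s + (b : ℕ) := congrArg Fin.val h
    exact Fin.ext (by omega)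
  have hgF : ∀ k, g k ∉ F := by
    intro k hk
    have := (hFmem _).mp hk
    simp [hgdef] at this
  set X : Finset (Fin t) → Finset (Fin n) := fun S => ((F \ S).inf B) \ (S.sup B) with hX
  have himgF : ∀ A : Finset (Fin (t - s)), Disjoint (A.image g) F := by
    intro A
    rw [Finset.disjoint_left]
    intro i hi hiF
    obtain ⟨k, _, rfl⟩ := Finset.mem_image.mp hi
    exact hgF k hiF
  -- key counting lemma
  have key : ∀ j, s - r ≤ j → j ≤ w → j ≤ s → ∀ S, S ⊆ F → S.card = j →
      ∀ L' M' : Finset (Fin (t - s)), Disjoint L' M' →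
        L'.card = r - (s - j) → M'.card = w - j →
        d ≤ (((L'.inf fun k => B (g k)) \ (M'.sup fun k => B (g k))) ∩ X S).card := by
    intro j hj1 hj2 hj3 S hSF hScard L' M' hdisj hL' hM'
    set L : Finset (Fin t) := (F \ S) ∪ L'.image g with hLdef
    set M : Finset (Fin t) := S ∪ M'.image g with hMdef
    have hLM : Disjoint L M := by
      rw [hLdef, hMdef, Finset.disjoint_union_left, Finset.disjoint_union_right,
        Finset.disjoint_union_right]
      refine ⟨⟨Finset.sdiff_disjoint, ?_⟩, ⟨?_, ?_⟩⟩
      · exact ((himgF M').mono_right Finset.sdiff_subset).symm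
      · exact (himgF L').mono_right hSF
      · rw [Finset.disjoint_left]
        intro i hi hi'
        obtain ⟨k, hk, rfl⟩ := Finset.mem_image.mp hi
        obtain ⟨k', hk', hkk⟩ := Finset.mem_image.mp hi'
        rw [hg hkk] at hk'
        exact Finset.disjoint_left.mp hdisj hk hk'
    have hLcard : L.card = r := by
      rw [hLdef, Finset.card_union_of_disjoint (((himgF L').mono_right
        (Finset.sdiff_subset)).symm), Finset.card_sdiff_of_subset hSF,
        Finset.card_image_of_injective _ hg, hFcard, hScard, hL']
      omega
    have hMcard : M.card = w := by
      rw [hMdef, Finset.card_union_of_disjoint (((himgF M').mono_right hSF).symm),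
        Finset.card_image_of_injective _ hg, hScard, hM']
      omega
    refine le_trans (hB L M hLM hLcard hMcard) (Finset.card_le_card ?_)
    intro x hx
    rw [Finset.mem_sdiff, mem_finset_inf, Finset.mem_sup] at hx
    obtain ⟨hx1, hx2⟩ := hx
    push_neg at hx2
    rw [Finset.mem_inter, Finset.mem_sdiff, mem_finset_inf, Finset.mem_sup, hX,
      Finset.mem_sdiff, mem_finset_inf, Finset.mem_sup]
    refine ⟨⟨fun k hk => hx1 _ (Finset.mem_union_right _ (Finset.mem_image_of_mem g hk)),
      ?_⟩, fun i hi => hx1 _ (Finset.mem_union_left _ hi), ?_⟩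
    · push_neg
      intro k hk
      exact hx2 _ (Finset.mem_union_right _ (Finset.mem_image_of_mem g hk))
    · push_neg
      intro i hi
      exact hx2 _ (Finset.mem_union_left _ hi)
  -- per-subset bound on Ncff
  have claim : ∀ j ∈ Finset.Icc (s - r) (min w s), ∀ S ∈ F.powersetCard j,
      Ncff (r - (s - j)) (w - j) d (t - s) ≤ (X S).card := by
    intro j hj S hS
    rw [Finset.mem_Icc] at hj
    obtain ⟨hj1, hj2⟩ := hj
    have hj2w : j ≤ w := le_trans hj2 (min_le_left _ _)
    have hj2s : j ≤ s := le_trans hj2 (min_le_right _ _)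
    rw [Finset.mem_powersetCard] at hS
    obtain ⟨hSF, hScard⟩ := hS
    by_cases hdeg : r - (s - j) = 0 ∨ w - j = 0
    · rw [Ncff, if_pos hdeg]
      obtain ⟨L', _, hL'c⟩ := Finset.exists_subset_card_eq
        (show r - (s - j) ≤ (Finset.univ : Finset (Fin (t - s))).card by
          simp only [Finset.card_univ, Fintype.card_fin]; omega)
      obtain ⟨M', hM'sub, hM'c⟩ := Finset.exists_subset_card_eq
        (show w - j ≤ ((Finset.univ : Finset (Fin (t - s))) \ L').card by
          rw [Finset.card_sdiff_of_subset (Finset.subset_univ _)]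
          simp only [Finset.card_univ, Fintype.card_fin]
          omega)
      have hdis : Disjoint L' M' := Finset.disjoint_sdiff.mono_right hM'sub
      calc 1 ≤ d := hd
        _ ≤ _ := key j hj1 hj2w hj2s S hSF hScard L' M' hdis hL'c hM'c
        _ ≤ (X S).card := Finset.card_le_card Finset.inter_subset_right
    · push_neg at hdeg
      rw [Ncff, if_neg (by push_neg; exact hdeg)]
      apply Nat.sInf_le
      set m := (X S).card with hm
      set e := (X S).equivFin with he
      refine ⟨fun k => Finset.univ.filter (fun p : Fin m => ((e.symm p : {x // x ∈ X S}) : Fin n) ∈ B (g k)), ?_⟩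
      intro L' M' hdis hL' hM'
      have hT := key j hj1 hj2w hj2s S hSF hScard L' M' hdis hL' hM'
      refine le_trans hT (Finset.card_le_card_of_surjOn
        (fun p : Fin m => ((e.symm p : {x // x ∈ X S}) : Fin n)) ?_)
      intro x hx
      have hx' := hx
      rw [Finset.coe_inter, Set.mem_inter_iff] at hx'
      obtain ⟨hx1, hxS⟩ := hx'
      have hxS' : x ∈ X S := hxS
      refine ⟨e ⟨x, hxS'⟩, ?_, by simp⟩
      rw [Finset.mem_coe, Finset.mem_sdiff, mem_finset_inf, Finset.mem_sup]
      rw [Finset.mem_coe, Finset.mem_inter, Finset.mem_sdiff, mem_finset_inf,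
        Finset.mem_sup] at hx
      obtain ⟨⟨ha, hb⟩, _⟩ := hx
      constructor
      · intro k hk
        simp only [Finset.mem_filter, Finset.mem_univ, true_and, Equiv.symm_apply_apply]
        exact ha k hk
      · push_neg at hb ⊢
        intro k hk
        simp only [Finset.mem_filter, Finset.mem_univ, true_and, Equiv.symm_apply_apply]
        exact hb k hk
  -- assemble
  have hXdisj : ∀ S ∈ F.powerset, ∀ S' ∈ F.powerset, S ≠ S' → Disjoint (X S) (X S') := by
    have base : ∀ S S' : Finset (Fin t), S ⊆ F → (∃ i, i ∈ S ∧ i ∉ S') → Disjoint (X S) (X S') := by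
      intro S S' hSF ⟨i, hiS, hiS'⟩
      rw [Finset.disjoint_left]
      intro x hx hx'
      rw [hX, Finset.mem_sdiff, mem_finset_inf, Finset.mem_sup] at hx hx'
      push_neg at hx hx'
      exact hx.2 i hiS (hx'.1 i (Finset.mem_sdiff.mpr ⟨hSF hiS, hiS'⟩))
    intro S hS S' hS' hne
    rw [Finset.mem_powerset] at hS hS'
    by_cases hss : S ⊆ S'
    · obtain ⟨i, hi, hi'⟩ := Finset.not_subset.mp (fun h => hne (Finset.Subset.antisymm hss h))
      exact (base S' S hS' ⟨i, hi, hi'⟩).symm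
    · obtain ⟨i, hi, hi'⟩ := Finset.not_subset.mp hss
      exact base S S' hS ⟨i, hi, hi'⟩
  set P : Finset (Finset (Fin t)) := (Finset.Icc (s - r) (min w s)).biUnion
    (fun j => F.powersetCard j) with hP
  have hPsub : ∀ S ∈ P, S ∈ F.powerset := by
    intro S hSP
    rw [hP, Finset.mem_biUnion] at hSP
    obtain ⟨j, _, hj⟩ := hSP
    rw [Finset.mem_powersetCard] at hj
    exact Finset.mem_powerset.mpr hj.1
  calc ∑ j ∈ Finset.Icc (s - r) (min w s), s.choose j * Ncff (r - (s - j)) (w - j) d (t - s)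
      ≤ ∑ j ∈ Finset.Icc (s - r) (min w s), ∑ S ∈ F.powersetCard j, (X S).card := by
        refine Finset.sum_le_sum (fun j hj => ?_)
        calc s.choose j * Ncff (r - (s - j)) (w - j) d (t - s)
            = ∑ _S ∈ F.powersetCard j, Ncff (r - (s - j)) (w - j) d (t - s) := by
              rw [Finset.sum_const, Finset.card_powersetCard, hFcard, smul_eq_mul]
          _ ≤ _ := Finset.sum_le_sum (claim j hj)
    _ = ∑ S ∈ P, (X S).card := by
        rw [hP, Finset.sum_biUnion (fun a _ b _ hab =>
          F.pairwise_disjoint_powersetCard hab)]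
    _ = (P.biUnion X).card := (Finset.card_biUnion (fun S hS S' hS' hne =>
        hXdisj S (hPsub S hS) S' (hPsub S' hS') hne)).symm
    _ ≤ (Finset.univ : Finset (Fin n)).card := Finset.card_le_univ _
    _ = n := by simp

lemma cff_exists (r w d t : ℕ) :
    ∃ n : ℕ, ∃ B : Fin t → Finset (Fin n), IsCFF r w d n t B := by
  classical
  refine ⟨Fintype.card (Finset (Fin t) × Fin d), ?_⟩
  set N := Fintype.card (Finset (Fin t) × Fin d) with hN
  let e : Finset (Fin t) × Fin d ≃ Fin N := Fintype.equivFin _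
  refine ⟨fun i => Finset.univ.filter (fun p => i ∈ (e.symm p).1), ?_⟩
  intro L M hdisj hL hM
  have hsub : ∀ k : Fin d, e (L, k) ∈
      (L.inf fun i => Finset.univ.filter fun p => i ∈ (e.symm p).1) \
      (M.sup fun i => Finset.univ.filter fun p => i ∈ (e.symm p).1) := by
    intro k
    rw [Finset.mem_sdiff, mem_finset_inf]
    constructor
    · intro i hi
      simp only [Finset.mem_filter, Finset.mem_univ, true_and, Equiv.symm_apply_apply]
      exact hi
    · rw [Finset.mem_sup]
      rintro ⟨m, hm, hmem⟩
      simp only [Finset.mem_filter, Finset.mem_univ, true_and, Equiv.symm_apply_apply] at hmem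
      exact Finset.disjoint_left.mp hdisj hmem hm
  calc d = (Finset.univ : Finset (Fin d)).card := by simp
  _ ≤ _ := Finset.card_le_card_of_injOn (fun k => e (L, k))
      (fun k _ => hsub k)
      (fun a _ b _ h => by
        have := e.injective h
        exact (Prod.mk.injEq _ _ _ _).mp this |>.2)

/-- For positive integers `r, w, d, s, t` with `w ≤ r`, `0 < s ≤ r + w` and `t ≥ r + w`,
`N((r,w;d),t) ≥ Σ_{max(0,s−r) ≤ j ≤ min(w,s)} C(s,j) · N((r−s+j, w−j; d), t−s)`. -/
theorem cff_recursive_bound_second (r w d s t : ℕ)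
    (hr : 0 < r) (hw : 0 < w) (hwr : w ≤ r) (hd : 0 < d)
    (hs : 0 < s) (hsrw : s ≤ r + w) (ht : r + w ≤ t) :
    ∑ j ∈ Finset.Icc (s - r) (min w s), s.choose j * Ncff (r - (s - j)) (w - j) d (t - s)
      ≤ Ncff r w d t := by
  rw [Ncff, if_neg (by push_neg; omega)]
  have hne : {n : ℕ | ∃ B : Fin t → Finset (Fin n), IsCFF r w d n t B}.Nonempty := by
    obtain ⟨n, B, hB⟩ := cff_exists r w d t
    exact ⟨n, B, hB⟩
  obtain ⟨B, hB⟩ := Nat.sInf_mem hne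
  exact cff_main r w d s t hr hw hwr hd hs hsrw ht _ B hB
end

section
/- Let i, j, r, w, d be positive integers with 1 ≤ i ≤ r−1 and 1 ≤ j ≤ w−1, and suppose there exists an (i,j)-weakly cross-intersecting set-pairs of size g on a ground set of cardinality h. Then for every integer t ≥ max{h, r+w}, N((r,w;d),t) ≥ g · N((r−i, w−j; d), t−i−j). -/
lemma exists_isCFF (r w d t : ℕ) :
    ∃ n, ∃ B : Fin t → Finset (Fin n), IsCFF r w d n t B := by
  classical
  refine ⟨Fintype.card ((Finset (Fin t) × Finset (Fin t)) × Fin d), ?_⟩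
  set e := Fintype.equivFin ((Finset (Fin t) × Finset (Fin t)) × Fin d) with he
  refine ⟨fun k => Finset.univ.filter (fun x => k ∈ (e.symm x).1.1), ?_⟩
  intro L M hLM hL hM
  have hinj : Function.Injective (fun s : Fin d => e ((L, M), s)) := by
    intro a b hab
    have := e.injective hab
    simpa using this
  calc d = (Finset.univ.image (fun s : Fin d => e ((L, M), s))).card := by
        rw [Finset.card_image_of_injective _ hinj, Finset.card_univ, Fintype.card_fin]
    _ ≤ _ := by
        apply Finset.card_le_card
        intro x hx
        simp only [Finset.mem_image] at hx
        obtain ⟨s, -, rfl⟩ := hx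
        rw [Finset.mem_sdiff, Finset.mem_inf]
        constructor
        · intro l hl
          simp only [Finset.mem_filter, Finset.mem_univ, true_and, Equiv.symm_apply_apply]
          exact hl
        · rw [Finset.mem_sup]
          rintro ⟨m, hm, hmem⟩
          simp only [Finset.mem_filter, Finset.mem_univ, true_and,
            Equiv.symm_apply_apply] at hmem
          exact (Finset.disjoint_left.mp hLM hmem) hm

lemma ncff_le_of_restriction {n t' r' w' d : ℕ} (hr' : r' ≠ 0) (hw' : w' ≠ 0)
    (Y : Finset (Fin n)) (B' : Fin t' → Finset (Fin n))
    (H : ∀ L M : Finset (Fin t'), Disjoint L M → L.card = r' → M.card = w' →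
      d ≤ (((L.inf B') ∩ Y) \ M.sup B').card) :
    Ncff r' w' d t' ≤ Y.card := by
  classical
  rw [Ncff, if_neg (by simp [hr', hw'])]
  apply Nat.sInf_le
  refine ⟨fun m => Finset.univ.filter (fun p => (Y.equivFin.symm p : Fin n) ∈ B' m), ?_⟩
  intro L M hLM hL hM
  refine le_trans (H L M hLM hL hM) ?_
  set S := ((L.inf B') ∩ Y) \ M.sup B' with hS
  have hsub : ∀ x ∈ S, x ∈ Y := fun x hx => (Finset.mem_inter.mp (Finset.mem_sdiff.mp hx).1).2
  rw [← Finset.card_attach (s := S)]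
  apply Finset.card_le_card_of_injOn (fun x => Y.equivFin ⟨x.1, hsub x.1 x.2⟩)
  · rintro ⟨x, hx⟩ -
    obtain ⟨hx1, hx2⟩ := Finset.mem_sdiff.mp hx
    obtain ⟨hxinf, hxY⟩ := Finset.mem_inter.mp hx1
    rw [Finset.mem_coe, Finset.mem_sdiff, Finset.mem_inf]
    constructor
    · intro m hm
      simp only [Finset.mem_filter, Finset.mem_univ, true_and, Equiv.symm_apply_apply]
      exact Finset.mem_inf.mp hxinf m hm
    · rw [Finset.mem_sup]
      rintro ⟨m, hm, hmem⟩
      simp only [Finset.mem_filter, Finset.mem_univ, true_and,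
        Equiv.symm_apply_apply] at hmem
      exact hx2 (Finset.mem_sup.mpr ⟨m, hm, hmem⟩)
  · rintro ⟨x, hx⟩ - ⟨y, hy⟩ - hxy
    have := Y.equivFin.injective hxy
    simpa using congrArg Subtype.val this

/-- If there exists an `(i,j)`-weakly cross-intersecting set-pairs of size `g` on a
ground set of cardinality `h`, with `1 ≤ i ≤ r−1` and `1 ≤ j ≤ w−1`, then for every
`t ≥ max{h, r+w}`, `N((r,w;d),t) ≥ g · N((r−i, w−j; d), t−i−j)`. -/
theorem cff_ge_mul_of_ij_weakly_cross_intersecting (i j r w d g h : ℕ)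
    (hr : 0 < r) (hw : 0 < w) (hd : 0 < d) (hg : 0 < g) (hh : 0 < h)
    (hi1 : 1 ≤ i) (hir : i ≤ r - 1) (hj1 : 1 ≤ j) (hjw : j ≤ w - 1)
    (F : Fin g → Finset (Fin h) × Finset (Fin h))
    (hdisj : ∀ k, Disjoint (F k).1 (F k).2)
    (hcross : ∀ k l, k ≠ l → (((F k).1 ∩ (F l).2) ∪ ((F l).1 ∩ (F k).2)).Nonempty)
    (hA : ∀ k, (F k).1.card = i) (hB : ∀ k, (F k).2.card = j)
    (t : ℕ) (ht : max h (r + w) ≤ t) :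
    g * Ncff (r - i) (w - j) d (t - i - j) ≤ Ncff r w d t := by
  classical
  have hir' : i < r := by omega
  have hjw' : j < w := by omega
  have hht : h ≤ t := le_trans (le_max_left _ _) ht
  let ι : Fin h ↪ Fin t := ⟨Fin.castLE hht, Fin.castLE_injective hht⟩
  let A : Fin g → Finset (Fin t) := fun k => (F k).1.map ι
  let Bs : Fin g → Finset (Fin t) := fun k => (F k).2.map ι
  have hAcard : ∀ k, (A k).card = i := fun k => by
    simp only [A, Finset.card_map]; exact hA k
  have hBcard : ∀ k, (Bs k).card = j := fun k => by
    simp only [Bs, Finset.card_map]; exact hB k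
  have hABdisj : ∀ k, Disjoint (A k) (Bs k) := fun k =>
    (Finset.disjoint_map ι).mpr (hdisj k)
  obtain ⟨n₀, B₀, hB₀⟩ := exists_isCFF r w d t
  have hrw : Ncff r w d t
      = sInf {n : ℕ | ∃ B : Fin t → Finset (Fin n), IsCFF r w d n t B} := by
    rw [Ncff]; exact if_neg (by omega)
  rw [hrw]
  suffices key : ∀ n : ℕ, (∃ B : Fin t → Finset (Fin n), IsCFF r w d n t B) →
      g * Ncff (r - i) (w - j) d (t - i - j) ≤ n by
    exact key _ (Nat.sInf_mem (⟨n₀, B₀, hB₀⟩ :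
      {n : ℕ | ∃ B : Fin t → Finset (Fin n), IsCFF r w d n t B}.Nonempty))
  rintro n ⟨B, hcff⟩
  set N' := Ncff (r - i) (w - j) d (t - i - j) with hN'
  set X : Fin g → Finset (Fin n) := fun k => ((A k).inf B) \ ((Bs k).sup B) with hX
  have hdisjX : ∀ k l : Fin g, k ≠ l → Disjoint (X k) (X l) := by
    have main : ∀ k l : Fin g, ((F k).1 ∩ (F l).2).Nonempty → Disjoint (X k) (X l) := by
      intro k l ⟨a, ha⟩
      obtain ⟨h1, h2⟩ := Finset.mem_inter.mp ha
      apply Finset.disjoint_left.mpr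
      intro x hxk hxl
      have hxa : x ∈ B (ι a) :=
        Finset.mem_inf.mp (Finset.mem_sdiff.mp hxk).1 (ι a) (Finset.mem_map_of_mem ι h1)
      exact (Finset.mem_sdiff.mp hxl).2
        (Finset.mem_sup.mpr ⟨ι a, Finset.mem_map_of_mem ι h2, hxa⟩)
    intro k l hkl
    obtain ⟨a, ha⟩ := hcross k l hkl
    rcases Finset.mem_union.mp ha with ha | ha
    · exact main k l ⟨a, ha⟩
    · exact (main l k ⟨a, ha⟩).symm
  have hNle : ∀ k, N' ≤ (X k).card := by
    intro k
    set C : Finset (Fin t) := (A k ∪ Bs k)ᶜ with hCdef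
    have hABcard : (A k ∪ Bs k).card = i + j := by
      rw [Finset.card_union_of_disjoint (hABdisj k), hAcard, hBcard]
    have hCcard : C.card = t - i - j := by
      rw [hCdef, Finset.card_compl, hABcard, Fintype.card_fin, Nat.sub_sub]
    let e2 : Fin (t - i - j) ≃ {x // x ∈ C} :=
      (finCongr hCcard.symm).trans C.equivFin.symm
    let ι' : Fin (t - i - j) ↪ Fin t :=
      e2.toEmbedding.trans (Function.Embedding.subtype _)
    have hι'C : ∀ m, ι' m ∈ C := fun m => (e2 m).2
    rw [hN']
    apply ncff_le_of_restriction (by omega) (by omega) (X k) (fun m => B (ι' m))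
    intro L' M' hLM' hL' hM'
    set L : Finset (Fin t) := L'.map ι' ∪ A k with hLdef
    set M : Finset (Fin t) := M'.map ι' ∪ Bs k with hMdef
    have hmapC : ∀ (s : Finset (Fin (t - i - j))), ∀ x ∈ s.map ι', x ∈ C := by
      intro s x hx
      obtain ⟨m, -, rfl⟩ := Finset.mem_map.mp hx
      exact hι'C m
    have hmapA : ∀ (s : Finset (Fin (t - i - j))), Disjoint (s.map ι') (A k) := by
      intro s
      apply Finset.disjoint_left.mpr
      intro x hx hxA
      have := Finset.mem_compl.mp (hmapC s x hx)
      exact this (Finset.mem_union_left _ hxA)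
    have hmapB : ∀ (s : Finset (Fin (t - i - j))), Disjoint (s.map ι') (Bs k) := by
      intro s
      apply Finset.disjoint_left.mpr
      intro x hx hxB
      have := Finset.mem_compl.mp (hmapC s x hx)
      exact this (Finset.mem_union_right _ hxB)
    have hLMdisj : Disjoint L M := by
      rw [hLdef, hMdef, Finset.disjoint_union_left, Finset.disjoint_union_right,
        Finset.disjoint_union_right]
      exact ⟨⟨(Finset.disjoint_map ι').mpr hLM', hmapB L'⟩,
        ⟨(hmapA M').symm, hABdisj k⟩⟩
    have hLcard : L.card = r := by
      rw [hLdef, Finset.card_union_of_disjoint (hmapA L'), Finset.card_map, hL', hAcard]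
      omega
    have hMcard : M.card = w := by
      rw [hMdef, Finset.card_union_of_disjoint (hmapB M'), Finset.card_map, hM', hBcard]
      omega
    refine le_trans (hcff L M hLMdisj hLcard hMcard) (Finset.card_le_card ?_)
    intro x hx
    obtain ⟨hx1, hx2⟩ := Finset.mem_sdiff.mp hx
    have hx1' := Finset.mem_inf.mp hx1
    rw [Finset.mem_sdiff, Finset.mem_inter, Finset.mem_inf]
    refine ⟨⟨fun m hm => hx1' (ι' m) (Finset.mem_union_left _ (Finset.mem_map_of_mem ι' hm)), ?_⟩, ?_⟩
    · rw [hX, Finset.mem_sdiff, Finset.mem_inf]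
      refine ⟨fun a ha => hx1' a (Finset.mem_union_right _ ha), fun hsup => ?_⟩
      obtain ⟨a, ha, hxa⟩ := Finset.mem_sup.mp hsup
      exact hx2 (Finset.mem_sup.mpr ⟨a, Finset.mem_union_right _ ha, hxa⟩)
    · intro hsup
      obtain ⟨m, hm, hxm⟩ := Finset.mem_sup.mp hsup
      exact hx2 (Finset.mem_sup.mpr
        ⟨ι' m, Finset.mem_union_left _ (Finset.mem_map_of_mem ι' hm), hxm⟩)
  calc g * N' = ∑ _k : Fin g, N' := by
        rw [Finset.sum_const, Finset.card_univ, Fintype.card_fin, smul_eq_mul]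
    _ ≤ ∑ k : Fin g, (X k).card := Finset.sum_le_sum (fun k _ => hNle k)
    _ = (Finset.univ.biUnion X).card :=
        (Finset.card_biUnion (fun k _ l _ hkl => hdisjX k l hkl)).symm
    _ ≤ (Finset.univ : Finset (Fin n)).card := Finset.card_le_card (Finset.subset_univ _)
    _ = n := by simp
end
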